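/- Let f ∈ m² be reduced, let I be a zero-dimensional ideal with I^{ea}(f) ⊆ I ⊆ m, and let 0 ≤ α ≤ 1 be rational. Then (1+α)²·dim_ℂ(R/I) ≤ γ_α(f;I) ≤ (dim_ℂ(R/I) + α)². -/

import Mathlib

open MvPowerSeries

noncomputable section

/-- `R = ℂ⟦x,y⟧`, the ring of formal power series in two variables over `ℂ`. -/
abbrev R2 : Type := MvPowerSeries (Fin 2) ℂ

/-- The maximal ideal `m = ⟨x, y⟩` of `ℂ⟦x,y⟧`. -/
def mm : Ideal R2 := Ideal.span {X 0, X 1}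

/-- `dim_ℂ R/I` as an extended natural number. -/
def edim (I : Ideal R2) : ℕ∞ := Cardinal.toENat (Module.rank ℂ (R2 ⧸ I))

/-- `dim_ℂ R/I` as a natural number (junk value `0` when infinite). -/
def fdim (I : Ideal R2) : ℕ := (edim I).toNat

/-- The formal partial derivative of a power series with respect to the `i`-th variable. -/
def pd (i : Fin 2) (f : R2) : R2 :=
  fun d => ((d i : ℂ) + 1) * coeff (R := ℂ) (d + Finsupp.single i 1) f

/-- The Tjurina ideal `I^{ea}(f) = ⟨∂f/∂x, ∂f/∂y, f⟩`. -/
def Tjurina (f : R2) : Ideal R2 := Ideal.span {pd 0 f, pd 1 f, f}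

/-- The intersection multiplicity `i(f,g) = dim_ℂ R/⟨f,g⟩ ∈ ℕ ∪ {∞}`. -/
def interNum (f g : R2) : ℕ∞ := edim (Ideal.span {f, g})

/-- `λ_α(f;I,g) = (α·i(f,g) + (1−α)·dim_ℂ(R/I))² / (i(f,g) − dim_ℂ(R/I))`. -/
def lam (α : ℚ) (f : R2) (I : Ideal R2) (g : R2) : ℝ :=
  ((α : ℝ) * ((interNum f g).toNat : ℝ) + (1 - (α : ℝ)) * (fdim I : ℝ)) ^ 2 /
    (((interNum f g).toNat : ℝ) - (fdim I : ℝ))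

/-- `γ_α(f;I) = max({(1+α)²·dim_ℂ(R/I)} ∪ {λ_α(f;I,g) : g ∈ I, i(f,g) ≤ 2·dim_ℂ(R/I)})`. -/
def gam (α : ℚ) (f : R2) (I : Ideal R2) : ℝ :=
  sSup ({(1 + (α : ℝ)) ^ 2 * (fdim I : ℝ)} ∪
    {x : ℝ | ∃ g ∈ I, interNum f g ≤ 2 * edim I ∧ x = lam α f I g})

/-- A complete intersection ideal: zero-dimensional and generated by two elements. -/
def IsCI (I : Ideal R2) : Prop := edim I < ⊤ ∧ ∃ a b : R2, I = Ideal.span {a, b}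

/-- `γ_α^{ea}(f) = max({0} ∪ {γ_α(f;I) : I a complete intersection ideal,
`I^{ea}(f) ⊆ I ⊆ m`})`. -/
def gamEA (α : ℚ) (f : R2) : ℝ :=
  sSup ({0} ∪ {x : ℝ | ∃ I : Ideal R2, IsCI I ∧ Tjurina f ≤ I ∧ I ≤ mm ∧ x = gam α f I})


lemma edim_anti {I J : Ideal R2} (h : J ≤ I) : edim I ≤ edim J := by
  have hs : Function.Surjective
      (Ideal.quotientMapₐ I (AlgHom.id ℂ R2) (by simpa using h)) := by
    intro x
    obtain ⟨y, rfl⟩ := Ideal.Quotient.mk_surjective x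
    exact ⟨Ideal.Quotient.mk J y, by simp⟩
  exact Cardinal.toENat.monotone'
    (LinearMap.rank_le_of_surjective
      (Ideal.quotientMapₐ I (AlgHom.id ℂ R2) (by simpa using h)).toLinearMap hs)

set_option synthInstance.maxHeartbeats 1000000 in
lemma one_le_edim {I : Ideal R2} (hIm : I ≤ mm) : 1 ≤ edim I := by
  have hne : I ≠ ⊤ := by
    intro htop
    have h1 : (1 : R2) ∈ mm := hIm (htop ▸ Submodule.mem_top)
    have hk : mm ≤ RingHom.ker (constantCoeff (σ := Fin 2) (R := ℂ)) := by
      rw [mm, Ideal.span_le]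
      rintro g (rfl | rfl) <;> simp [RingHom.mem_ker]
    have := hk h1
    simp [RingHom.mem_ker] at this
  have : Nontrivial (R2 ⧸ I) := Ideal.Quotient.nontrivial_iff.mpr hne
  have hr : (1 : Cardinal) ≤ Module.rank ℂ (R2 ⧸ I) :=
    Cardinal.one_le_iff_pos.mpr (rank_pos)
  calc (1 : ℕ∞) = Cardinal.toENat 1 := by simp
    _ ≤ _ := Cardinal.toENat.monotone' hr

/-- For `f ∈ m²` reduced, `I` zero-dimensional with `I^{ea}(f) ⊆ I ⊆ m`,
and rational `0 ≤ α ≤ 1`, one has `(1+α)²·dim_ℂ(R/I) ≤ γ_α(f;I) ≤ (dim_ℂ(R/I) + α)²`. -/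
theorem stmt2 (f : R2) (hf2 : f ∈ mm ^ 2) (hred : Squarefree f)
    (I : Ideal R2) (hI0 : edim I < ⊤) (hTI : Tjurina f ≤ I) (hIm : I ≤ mm)
    (α : ℚ) (hα0 : 0 ≤ α) (hα1 : α ≤ 1) :
    (1 + (α : ℝ)) ^ 2 * (fdim I : ℝ) ≤ gam α f I ∧
    gam α f I ≤ ((fdim I : ℝ) + α) ^ 2 := by
  set d : ℕ := fdim I with hdN
  have hed : edim I = (d : ℕ∞) := (ENat.coe_toNat hI0.ne).symm
  have hd1 : 1 ≤ d := by
    have := one_le_edim hIm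
    rw [hed] at this
    exact_mod_cast this
  have hd1R : (1 : ℝ) ≤ (d : ℝ) := by exact_mod_cast hd1
  have hα0R : (0 : ℝ) ≤ (α : ℝ) := by exact_mod_cast hα0
  have hα1R : (α : ℝ) ≤ 1 := by exact_mod_cast hα1
  set B : ℝ := ((d : ℝ) + α) ^ 2 with hB
  have hfI : f ∈ I := hTI (Ideal.subset_span (by simp))
  have key : ∀ x ∈ ({(1 + (α : ℝ)) ^ 2 * (fdim I : ℝ)} ∪
      {x : ℝ | ∃ g ∈ I, interNum f g ≤ 2 * edim I ∧ x = lam α f I g}), x ≤ B := by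
    rintro x (rfl | ⟨g, hgI, hn2, rfl⟩)
    · nlinarith [mul_nonneg (sub_nonneg.mpr hd1R)
        (sub_nonneg.mpr ((mul_le_one₀ hα1R hα0R hα1R).trans hd1R))]
    · have hspan : Ideal.span {f, g} ≤ I := by
        rw [Ideal.span_le]; rintro h (rfl | rfl) <;> assumption
      have hlow : (d : ℕ∞) ≤ interNum f g := hed ▸ edim_anti hspan
      have hfin : interNum f g ≠ ⊤ := by
        intro htop
        rw [htop, hed] at hn2
        exact (by simpa using hn2 : (⊤ : ℕ∞) ≤ ((2 * d : ℕ) : ℕ∞)).not_gt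
          (ENat.coe_lt_top _)
      set n : ℕ := (interNum f g).toNat with hnN
      have hen : interNum f g = (n : ℕ∞) := (ENat.coe_toNat hfin).symm
      rw [hen, hed] at hn2; rw [hen] at hlow
      have hdn : d ≤ n := by exact_mod_cast hlow
      have hn2d : n ≤ 2 * d := by
        have h2d : ((n : ℕ∞)) ≤ ((2 * d : ℕ) : ℕ∞) := by push_cast; exact hn2
        exact_mod_cast h2d
      have hdnR : (d : ℝ) ≤ (n : ℝ) := by exact_mod_cast hdn
      have hn2dR : (n : ℝ) ≤ 2 * d := by exact_mod_cast hn2d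
      rcases eq_or_lt_of_le hdn with heq | hlt
      · rw [lam, ← hnN, ← hdN, ← heq, sub_self, div_zero]
        positivity
      · have htpos : (0 : ℝ) < (n : ℝ) - d := by
          have : (d : ℝ) < n := by exact_mod_cast hlt
          linarith
        rw [lam, ← hnN, ← hdN, div_le_iff₀ htpos]
        have h1 : (0 : ℝ) ≤ (n : ℝ) - d - 1 := by
          have : (d : ℝ) + 1 ≤ n := by exact_mod_cast hlt
          linarith
        have h2 : (0 : ℝ) ≤ (d : ℝ) ^ 2 - (α : ℝ) ^ 2 * ((n : ℝ) - d) := by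
          have hα2 : (α : ℝ) ^ 2 ≤ 1 := by nlinarith
          nlinarith
        nlinarith [mul_nonneg h1 h2]
  have hne : ((1 + (α : ℝ)) ^ 2 * (fdim I : ℝ)) ∈ ({(1 + (α : ℝ)) ^ 2 * (fdim I : ℝ)} ∪
      {x : ℝ | ∃ g ∈ I, interNum f g ≤ 2 * edim I ∧ x = lam α f I g}) := Or.inl rfl
  constructor
  · exact le_csSup ⟨B, key⟩ hne
  · exact csSup_le ⟨_, hne⟩ key

end
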